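/- Let R⁺ be Rayleigh distributed and U standard normal, independent, and ρ ∈ (-1,1). Then P(ρR⁺ + √(1-ρ²)·U < 0) = (1 - ρ)/2. -/

import Mathlib

open MeasureTheory Real Set Filter

noncomputable def stdNormalCDF (x : ℝ) : ℝ :=
  ∫ t in Set.Iic x, (Real.sqrt (2 * Real.pi))⁻¹ * Real.exp (-t ^ 2 / 2)

noncomputable def phi (t : ℝ) : ℝ := (Real.sqrt (2 * Real.pi))⁻¹ * Real.exp (-t ^ 2 / 2)

lemma phi_cont : Continuous phi := by
  unfold phi; fun_prop

lemma phi_int : Integrable phi := by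
  have h : Integrable (fun x : ℝ => Real.exp (-(1/2 : ℝ) * x ^ 2)) :=
    integrable_exp_neg_mul_sq (by norm_num)
  have := h.const_mul (Real.sqrt (2 * Real.pi))⁻¹
  refine this.congr (Filter.Eventually.of_forall fun x => ?_)
  unfold phi; ring_nf

lemma phi_nonneg (t : ℝ) : 0 ≤ phi t := by
  unfold phi; positivity

lemma integral_phi : ∫ t, phi t = 1 := by
  unfold phi
  rw [MeasureTheory.integral_const_mul]
  have h : ∫ x : ℝ, Real.exp (-x ^ 2 / 2) = ∫ x : ℝ, Real.exp (-(1/2 : ℝ) * x ^ 2) := by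
    congr 1; ext x; ring_nf
  rw [h, integral_gaussian]
  rw [show Real.pi / (1/2 : ℝ) = 2 * Real.pi by ring]
  rw [inv_mul_cancel₀ (by positivity : Real.sqrt (2 * Real.pi) ≠ 0)]

lemma cdf_zero : stdNormalCDF 0 = 1/2 := by
  unfold stdNormalCDF
  rw [MeasureTheory.integral_const_mul]
  have h : ∫ t in Set.Iic (0:ℝ), Real.exp (-t ^ 2 / 2)
      = ∫ t in Set.Ioi (0:ℝ), Real.exp (-t ^ 2 / 2) := by
    rw [show Set.Ioi (0:ℝ) = Set.Ioi (-0 : ℝ) by norm_num,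
      ← integral_comp_neg_Iic 0 (fun t => Real.exp (-t ^ 2 / 2))]
    simp
  rw [h]
  have h2 : ∫ t in Set.Ioi (0:ℝ), Real.exp (-t ^ 2 / 2)
      = ∫ t in Set.Ioi (0:ℝ), Real.exp (-(1/2 : ℝ) * t ^ 2) := by
    congr 1; ext t; ring_nf
  rw [h2, integral_gaussian_Ioi]
  rw [show Real.pi / (1/2 : ℝ) = 2 * Real.pi by ring]
  rw [show (Real.sqrt (2 * Real.pi))⁻¹ * (Real.sqrt (2*Real.pi)/2)
      = (Real.sqrt (2*Real.pi))⁻¹ * Real.sqrt (2*Real.pi) / 2 by ring,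
    inv_mul_cancel₀ (by positivity : Real.sqrt (2 * Real.pi) ≠ 0)]

lemma cdf_eq (x : ℝ) : stdNormalCDF x = 1/2 + ∫ t in (0:ℝ)..x, phi t := by
  have := intervalIntegral.integral_Iic_sub_Iic (phi_int.integrableOn (s := Set.Iic 0))
    (phi_int.integrableOn (s := Set.Iic x))
  have hx : stdNormalCDF x = ∫ t in Set.Iic x, phi t := rfl
  have h0 : stdNormalCDF 0 = ∫ t in Set.Iic (0:ℝ), phi t := rfl
  rw [hx]
  linarith [cdf_zero, this, h0]

lemma cdf_deriv (x : ℝ) : HasDerivAt stdNormalCDF (phi x) x := by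
  have h : HasDerivAt (fun u => ∫ t in (0:ℝ)..u, phi t) (phi x) x :=
    intervalIntegral.integral_hasDerivAt_right (phi_int.intervalIntegrable)
      (phi_cont.stronglyMeasurable.stronglyMeasurableAtFilter) phi_cont.continuousAt
  have : stdNormalCDF = fun u => 1/2 + ∫ t in (0:ℝ)..u, phi t := funext cdf_eq
  rw [this]
  exact (h.const_add (1/2))

lemma cdf_nonneg (x : ℝ) : 0 ≤ stdNormalCDF x :=
  MeasureTheory.setIntegral_nonneg measurableSet_Iic (fun t _ => phi_nonneg t)

lemma cdf_le_one (x : ℝ) : stdNormalCDF x ≤ 1 := by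
  have := MeasureTheory.setIntegral_le_integral (s := Set.Iic x) phi_int
    (Filter.Eventually.of_forall phi_nonneg)
  rw [integral_phi] at this
  exact this

lemma cdf_tendsto_atBot : Tendsto stdNormalCDF atBot (nhds 0) := by
  have h : Tendsto (fun x : ℝ => ∫ t in x..(0:ℝ), phi t) atBot
      (nhds (∫ t in Set.Iic (0:ℝ), phi t)) :=
    MeasureTheory.intervalIntegral_tendsto_integral_Iic 0 phi_int.integrableOn tendsto_id
  have h0 : (∫ t in Set.Iic (0:ℝ), phi t) = 1/2 := cdf_zero
  rw [h0] at h
  have : stdNormalCDF = fun x => 1/2 - ∫ t in x..(0:ℝ), phi t := by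
    funext x; rw [cdf_eq x, intervalIntegral.integral_symm]; ring
  rw [this]
  have := (tendsto_const_nhds (x := (1/2:ℝ)) (f := atBot)).sub h
  simpa using this

lemma cdf_continuous : Continuous stdNormalCDF :=
  continuous_iff_continuousAt.2 fun x => (cdf_deriv x).continuousAt

lemma aux (c s : ℝ) (hs : 0 < s) (hs2 : s ^ 2 = 1 + c ^ 2) :
    (∫ r in Set.Ioi (0:ℝ), r * Real.exp (-r ^ 2 / 2) * stdNormalCDF (-(c * r)))
      = 1/2 - c / (2 * s) := by
  set G : ℝ → ℝ := fun r =>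
    -(Real.exp (-r ^ 2 / 2) * stdNormalCDF (-(c * r)))
      + (c / s) * stdNormalCDF (-(s * r)) with hG
  have key : ∀ r : ℝ, Real.exp (-r ^ 2 / 2) * phi (-(c * r)) = phi (-(s * r)) := by
    intro r
    unfold phi
    rw [show ((-(s * r)) ^ 2 : ℝ) = r ^ 2 + (-(c * r)) ^ 2 by nlinarith [hs2]]
    rw [show (-(r ^ 2 + (-(c * r)) ^ 2) / 2 : ℝ)
        = -r ^ 2 / 2 + -(-(c * r)) ^ 2 / 2 by ring, Real.exp_add]
    ring
  have hderiv : ∀ r ∈ Set.Ici (0:ℝ),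
      HasDerivAt G (r * Real.exp (-r ^ 2 / 2) * stdNormalCDF (-(c * r))) r := by
    intro r _
    have h1 : HasDerivAt (fun r : ℝ => -r ^ 2 / 2) (-r) r := by
      have h := ((hasDerivAt_pow 2 r).neg).div_const 2
      refine h.congr_deriv ?_
      push_cast
      ring
    have hexp : HasDerivAt (fun r : ℝ => Real.exp (-r ^ 2 / 2))
        (Real.exp (-r ^ 2 / 2) * (-r)) r := h1.exp
    have hlin1 : HasDerivAt (fun r : ℝ => -(c * r)) (-c) r := by
      have h := ((hasDerivAt_id r).const_mul c).neg; simp only [mul_one] at h; exact h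
    have hlin2 : HasDerivAt (fun r : ℝ => -(s * r)) (-s) r := by
      have h := ((hasDerivAt_id r).const_mul s).neg; simp only [mul_one] at h; exact h
    have hP1 : HasDerivAt (fun r : ℝ => stdNormalCDF (-(c * r)))
        (phi (-(c * r)) * (-c)) r := by have h := (cdf_deriv (-(c * r))).comp r hlin1; exact h
    have hP2 : HasDerivAt (fun r : ℝ => stdNormalCDF (-(s * r)))
        (phi (-(s * r)) * (-s)) r := by have h := (cdf_deriv (-(s * r))).comp r hlin2; exact h
    have hGd := ((hexp.mul hP1).neg).add (hP2.const_mul (c / s))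
    refine hGd.congr_deriv ?_
    rw [← key r]
    field_simp
    ring
  have hg : IntegrableOn (fun r : ℝ => r * Real.exp (-r ^ 2 / 2)) (Set.Ioi 0) := by
    have h := integrable_mul_exp_neg_mul_sq (b := 1/2) (by norm_num)
    exact (h.congr (Filter.Eventually.of_forall fun x => by ring_nf)).integrableOn
  have hint : IntegrableOn
      (fun r : ℝ => r * Real.exp (-r ^ 2 / 2) * stdNormalCDF (-(c * r))) (Set.Ioi 0) := by
    refine Integrable.mono hg ?_ (Filter.Eventually.of_forall fun r => ?_)
    · exact (((continuous_id.mul (by fun_prop : Continuous fun r : ℝ => Real.exp (-r^2/2))).mul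
        (cdf_continuous.comp (by fun_prop))).aestronglyMeasurable).restrict
    · have h0 := cdf_nonneg (-(c * r)); have h1 := cdf_le_one (-(c * r))
      rw [Real.norm_eq_abs, Real.norm_eq_abs, abs_mul]
      have hb : |stdNormalCDF (-(c * r))| ≤ 1 := abs_le.2 ⟨by linarith, h1⟩
      nlinarith [abs_nonneg (r * Real.exp (-r ^ 2 / 2))]
  have htop : Tendsto G atTop (nhds 0) := by
    have hsq : Tendsto (fun r : ℝ => -r ^ 2 / 2) atTop atBot := by
      have h1 : Tendsto (fun r : ℝ => r ^ 2 / 2) atTop atTop :=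
        (tendsto_pow_atTop two_ne_zero).atTop_div_const (by norm_num)
      have := tendsto_neg_atTop_atBot.comp h1
      refine this.congr fun r => ?_
      simp only [Function.comp_apply]
      ring
    have hexp0 : Tendsto (fun r : ℝ => Real.exp (-r ^ 2 / 2)) atTop (nhds 0) :=
      Real.tendsto_exp_atBot.comp hsq
    have t1 : Tendsto (fun r : ℝ => Real.exp (-r ^ 2 / 2) * stdNormalCDF (-(c * r)))
        atTop (nhds 0) := by
      refine squeeze_zero_norm (a := fun r : ℝ => Real.exp (-r ^ 2 / 2)) (fun r => ?_) hexp0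
      rw [Real.norm_eq_abs, abs_mul, abs_of_nonneg (Real.exp_pos _).le,
        abs_of_nonneg (cdf_nonneg _)]
      nlinarith [cdf_le_one (-(c * r)), (Real.exp_pos (-r ^ 2 / 2)).le, cdf_nonneg (-(c * r))]
    have hlinb : Tendsto (fun r : ℝ => -(s * r)) atTop atBot := by
      exact tendsto_neg_atTop_atBot.comp (Tendsto.const_mul_atTop hs tendsto_id)
    have t2 : Tendsto (fun r : ℝ => (c / s) * stdNormalCDF (-(s * r))) atTop (nhds 0) := by
      have := (cdf_tendsto_atBot.comp hlinb).const_mul (c / s)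
      simpa using this
    have := (t1.neg).add t2
    simpa using this
  have := integral_Ioi_of_hasDerivAt_of_tendsto' hderiv hint htop
  rw [this]
  have hG0 : G 0 = -(1/2) + (c / s) * (1/2) := by
    simp [hG, cdf_zero]
  rw [hG0]
  field_simp
  ring

/-- For independent Rayleigh `R⁺` and standard normal `U` and `ρ ∈ (-1,1)`,
`P(ρR⁺ + √(1-ρ²)·U < 0) = (1-ρ)/2`. Conditioning on `R⁺ = r`, the probability is
`∫_0^∞ r e^{-r²/2} Φ(-ρr/√(1-ρ²)) dr`. -/
theorem stmt13 (ρ : ℝ) (hρ₁ : -1 < ρ) (hρ₂ : ρ < 1) :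
    (∫ r in Set.Ioi (0 : ℝ),
        r * Real.exp (-r ^ 2 / 2) *
          stdNormalCDF (-ρ * r / Real.sqrt (1 - ρ ^ 2))) = (1 - ρ) / 2 := by
  set q : ℝ := Real.sqrt (1 - ρ ^ 2) with hqdef
  have hq : 0 < q := Real.sqrt_pos.2 (by nlinarith)
  have hq2 : q ^ 2 = 1 - ρ ^ 2 := Real.sq_sqrt (by nlinarith)
  have hs2 : (1 / q) ^ 2 = 1 + (ρ / q) ^ 2 := by
    field_simp
    nlinarith [hq2]
  have h := aux (ρ / q) (1 / q) (by positivity) hs2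
  have harg : ∀ r : ℝ, -(ρ / q * r) = -ρ * r / q := fun r => by ring
  simp only [harg] at h
  rw [h]
  have : (ρ / q) / (2 * (1 / q)) = ρ / 2 := by
    field_simp
  rw [this]
  ring
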